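/- Let T be a conformal Killing-Yano tensor on a metric Lie algebra (𝔤, ⟨·,·⟩) with associated 1-form θ and associated vector ξ. Then θ ∘ T = 0, or equivalently Tξ = 0. -/

import Mathlib

section Defs

variable {g : Type*} [LieRing g] [LieAlgebra ℝ g]

/-- `B` is a (positive definite) inner product on the real Lie algebra `g`,
given as a bilinear form. -/
structure IsInnerProduct (B : g →ₗ[ℝ] g →ₗ[ℝ] ℝ) : Prop where
  symm : ∀ x y : g, B x y = B y x
  posdef : ∀ x : g, x ≠ 0 → 0 < B x x

/-- The Koszul formula characterizing the Levi-Civita connection of the metric Lie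
algebra `(g, B)`: `2⟨∇ₓy, z⟩ = ⟨[x,y], z⟩ − ⟨[y,z], x⟩ + ⟨[z,x], y⟩`. -/
def IsLeviCivita (B : g →ₗ[ℝ] g →ₗ[ℝ] ℝ) (D : g → g → g) : Prop :=
  ∀ x y z : g, 2 * B (D x y) z = B ⁅x, y⁆ z - B ⁅y, z⁆ x + B ⁅z, x⁆ y

/-- A skew-symmetric endomorphism with respect to `B`. -/
def IsSkewSymmetric (B : g →ₗ[ℝ] g →ₗ[ℝ] ℝ) (T : g →ₗ[ℝ] g) : Prop :=
  ∀ x y : g, B (T x) y = - B x (T y)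

/-- The conformal Killing-Yano equation for an endomorphism `T` with associated 1-form `θ`:
`⟨(∇ₓT)y, z⟩ + ⟨(∇_yT)x, z⟩ = 2⟨x,y⟩θ(z) − ⟨y,z⟩θ(x) − ⟨x,z⟩θ(y)`,
where `(∇ₓT)y = ∇ₓ(Ty) − T(∇ₓy)`. -/
def IsCKYWith (B : g →ₗ[ℝ] g →ₗ[ℝ] ℝ) (D : g → g → g) (T : g →ₗ[ℝ] g)
    (θ : g →ₗ[ℝ] ℝ) : Prop :=
  ∀ x y z : g,
    B (D x (T y) - T (D x y)) z + B (D y (T x) - T (D y x)) z =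
      2 * B x y * θ z - B y z * θ x - B x z * θ y

/-- A Killing-Yano tensor is a CKY tensor with `θ = 0`. -/
def IsKY (B : g →ₗ[ℝ] g →ₗ[ℝ] ℝ) (D : g → g → g) (T : g →ₗ[ℝ] g) : Prop :=
  IsCKYWith B D T 0

/-- A parallel tensor: `(∇ₓT)y = 0` for all `x, y`. -/
def IsParallelT (D : g → g → g) (T : g →ₗ[ℝ] g) : Prop :=
  ∀ x y : g, D x (T y) - T (D x y) = 0

/-- The orthogonal complement of a submodule with respect to the bilinear form `B`. -/
def orthComp (B : g →ₗ[ℝ] g →ₗ[ℝ] ℝ) (p : Submodule ℝ g) : Submodule ℝ g where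
  carrier := {x : g | ∀ y ∈ p, B x y = 0}
  add_mem' := by
    intro a b ha hb y hy
    simp only [map_add, LinearMap.add_apply, ha y hy, hb y hy, add_zero]
  zero_mem' := by
    intro y hy
    simp
  smul_mem' := by
    intro c a ha y hy
    simp only [map_smul, LinearMap.smul_apply, ha y hy, smul_eq_mul, mul_zero]

end Defs

/-- For a CKY tensor `T` with associated 1-form `θ` and associated vector `ξ`
on a metric Lie algebra, one has `θ ∘ T = 0`, or equivalently `T ξ = 0`. -/
theorem cky_theta_comp_T_eq_zero {g : Type*} [LieRing g] [LieAlgebra ℝ g]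
    [FiniteDimensional ℝ g]
    (B : g →ₗ[ℝ] g →ₗ[ℝ] ℝ) (hB : IsInnerProduct B)
    (D : g → g → g) (hD : IsLeviCivita B D)
    (T : g →ₗ[ℝ] g) (hT : IsSkewSymmetric B T)
    (θ : g →ₗ[ℝ] ℝ) (hCKY : IsCKYWith B D T θ)
    (ξ : g) (hξ : ∀ x : g, θ x = B ξ x) :
    (∀ x : g, θ (T x) = 0) ∧ T ξ = 0 := by
  -- Step 0: B x (T x) = 0
  have horth : ∀ x : g, B x (T x) = 0 := by
    intro x
    have h1 := hT x x
    have h2 := hB.symm (T x) x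
    linarith
  -- Step 1: the key identity  B ⁅T (T x), x⁆ x = B x x * θ (T x)
  have hI : ∀ x : g, B ⁅T (T x), x⁆ x = B x x * θ (T x) := by
    intro x
    -- B (D x (T x)) (T x) = 0
    have h2 : B (D x (T x)) (T x) = 0 := by
      have := hD x (T x) (T x)
      have e1 : (⁅T x, T x⁆ : g) = 0 := lie_self _
      have e2 : (⁅T x, x⁆ : g) = -⁅x, T x⁆ := by rw [← lie_skew]
      rw [e1, e2] at this
      simp only [map_zero, LinearMap.zero_apply, map_neg, LinearMap.neg_apply] at this
      linarith
    -- B (T (D x x)) (T x) = - B ⁅T (T x), x⁆ x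
    have h3 : B (T (D x x)) (T x) = -B ⁅T (T x), x⁆ x := by
      have hskew := hT (D x x) (T x)
      have hk := hD x x (T (T x))
      have e1 : (⁅x, x⁆ : g) = 0 := lie_self _
      have e2 : (⁅x, T (T x)⁆ : g) = -⁅T (T x), x⁆ := by rw [← lie_skew]
      rw [e1, e2] at hk
      simp only [map_zero, LinearMap.zero_apply, map_neg, LinearMap.neg_apply] at hk
      -- hk : 2 * B (D x x) (T (T x)) = 0 - -(B ⁅T (T x), x⁆ x) + B ⁅T (T x), x⁆ x
      linarith
    have hc := hCKY x x (T x)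
    rw [horth x] at hc
    simp only [map_sub, LinearMap.sub_apply] at hc
    rw [h2, h3] at hc
    linarith
  -- Step 2: θ (T v) = 0 for eigenvectors v of T ∘ T
  have heig : ∀ (v : g) (μ : ℝ), v ≠ 0 → T (T v) = μ • v → θ (T v) = 0 := by
    intro v μ hv hTv
    have h := hI v
    rw [hTv, smul_lie, lie_self, smul_zero, map_zero, LinearMap.zero_apply] at h
    have hpos : 0 < B v v := hB.posdef v hv
    have := h.symm
    rcases mul_eq_zero.mp this with h' | h'
    · exact absurd h' (ne_of_gt hpos)
    · exact h'
  -- Step 3: spectral theorem setup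
  letI c : InnerProductSpace.Core ℝ g :=
    { inner := fun x y => B x y
      conj_inner_symm := fun x y => by simpa using hB.symm y x
      re_inner_nonneg := fun x => by
        by_cases h : x = 0
        · simp [h]
        · exact le_of_lt (hB.posdef x h)
      add_left := fun x y z => by simp
      smul_left := fun x y r => by simp
      definite := fun x hx => by
        by_contra h
        exact absurd hx (ne_of_gt (hB.posdef x h)) }
  letI : NormedAddCommGroup g := c.toNormedAddCommGroup
  letI : InnerProductSpace ℝ g := InnerProductSpace.ofCore c.toCore
  set S : g →ₗ[ℝ] g := T ∘ₗ T with hS_def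
  have hS : S.IsSymmetric := by
    intro x y
    have h1 := hT (T x) y
    have h2 := hT x (T y)
    have h3 := hB.symm (T x) (T y)
    show B (T (T x)) y = B x (T (T y))
    linarith
  have hθT : ∀ x : g, θ (T x) = 0 := by
    have hfr : Module.finrank ℝ g = Module.finrank ℝ g := rfl
    set b := hS.eigenvectorBasis hfr with hb
    have hcomp : (θ ∘ₗ T) = 0 := by
      apply b.toBasis.ext
      intro i
      have hev := hS.hasEigenvector_eigenvectorBasis hfr i
      have hne : b i ≠ 0 := hev.2
      have happ : S (b i) = hS.eigenvalues hfr i • b i :=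
        Module.End.HasEigenvector.apply_eq_smul hev
      have : T (T (b i)) = hS.eigenvalues hfr i • b i := happ
      simp only [OrthonormalBasis.coe_toBasis, LinearMap.comp_apply, LinearMap.zero_apply]
      exact heig (b i) (hS.eigenvalues hfr i) hne this
    intro x
    have := LinearMap.congr_fun hcomp x
    simpa using this
  refine ⟨hθT, ?_⟩
  by_contra h
  have hpos : 0 < B (T ξ) (T ξ) := hB.posdef _ h
  have hz : B (T ξ) (T ξ) = 0 := by
    have h1 := hT ξ (T ξ)
    have h2 := hξ (T (T ξ))
    have h3 := hθT (T ξ)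
    linarith
  linarith
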